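/- Let (X,T) be a simple, properly ordered Bratteli-Vershik system and let (X',T') be its telescoping to levels 0 = n_0 < n_1 < n_2 < .... Then every depth k pair of paths in X' (k >= 1) is the image under the telescoping of a pair of paths in X that is depth i for some i with n_k <= i < n_{k+1}. -/

import Mathlib

set_option autoImplicit false

/-- An ordered Bratteli diagram: finite nonempty vertex sets `V n`, a single root
vertex at level `0`, finite edge sets `E n` (edges from level `n` to level `n+1`,
multiple edges allowed), every vertex has an outgoing edge, every non-root vertex
an incoming edge, and the edges into each vertex carry a linear order, encoded by
the relation `elt` which relates only edges with the same target. -/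
structure BDiagram where
  V : ℕ → Type
  E : ℕ → Type
  fintV : ∀ n, Fintype (V n)
  fintE : ∀ n, Fintype (E n)
  nonV : ∀ n, Nonempty (V n)
  rootSubsingleton : Subsingleton (V 0)
  src : ∀ {n}, E n → V n
  tgt : ∀ {n}, E n → V (n + 1)
  hasOut : ∀ (n : ℕ) (v : V n), ∃ e : E n, src e = v
  hasIn : ∀ (n : ℕ) (v : V (n + 1)), ∃ e : E n, tgt e = v
  elt : ∀ {n}, E n → E n → Prop
  elt_tgt : ∀ (n : ℕ) (e f : E n), elt e f → tgt e = tgt f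
  elt_irrefl : ∀ (n : ℕ) (e : E n), ¬ elt e e
  elt_trans : ∀ (n : ℕ) (e f g : E n), elt e f → elt f g → elt e g
  elt_total : ∀ (n : ℕ) (e f : E n), tgt e = tgt f → e ≠ f → elt e f ∨ elt f e

namespace BDiagram

variable (B : BDiagram)

def castV {m n : ℕ} (h : m = n) (v : B.V m) : B.V n := h ▸ v

/-- An edge is minimal if no edge (into the same target) is below it. -/
def IsMinEdge {n : ℕ} (e : B.E n) : Prop := ∀ e' : B.E n, ¬ B.elt e' e

/-- An edge is maximal if no edge (into the same target) is above it. -/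
def IsMaxEdge {n : ℕ} (e : B.E n) : Prop := ∀ e' : B.E n, ¬ B.elt e e'

/-- The space of infinite paths from the root. -/
def PathSpace : Type := { x : ∀ n, B.E n // ∀ n, B.tgt (x n) = B.src (x (n + 1)) }

def IsMinPath (x : B.PathSpace) : Prop := ∀ n, B.IsMinEdge (x.1 n)

def IsMaxPath (x : B.PathSpace) : Prop := ∀ n, B.IsMaxEdge (x.1 n)

/-- Properly ordered: unique minimal and unique maximal path. -/
def ProperlyOrdered : Prop :=
  (∃! x : B.PathSpace, B.IsMinPath x) ∧ (∃! x : B.PathSpace, B.IsMaxPath x)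

/-- The partial order on cofinal paths: `x < y` iff they eventually agree and at the
last disagreement the edge of `x` is below the edge of `y`. -/
def pathLT (x y : B.PathSpace) : Prop :=
  ∃ N : ℕ, B.elt (x.1 N) (y.1 N) ∧ ∀ n : ℕ, N < n → x.1 n = y.1 n

/-- `T` is the Vershik map: each non-maximal path goes to its successor, and each
maximal path goes to a minimal path. -/
def IsVershik (T : B.PathSpace ≃ B.PathSpace) : Prop :=
  (∀ x : B.PathSpace, ¬ B.IsMaxPath x →
    B.pathLT x (T x) ∧ ∀ z : B.PathSpace, B.pathLT x z → ¬ B.pathLT z (T x)) ∧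
  (∀ x : B.PathSpace, B.IsMaxPath x → B.IsMinPath (T x))

/-- `f` is a chain of consecutive edges on levels `[a, b)`. -/
def SegOn (f : ∀ i, B.E i) (a b : ℕ) : Prop :=
  ∀ i : ℕ, a ≤ i → i + 1 < b → B.tgt (f i) = B.src (f (i + 1))

/-- Simplicity: some telescoping has complete connections between adjacent levels. -/
def Simple : Prop :=
  ∃ ns : ℕ → ℕ, StrictMono ns ∧ ns 0 = 0 ∧
    ∀ (l c : ℕ), ns (l + 1) = c + 1 →
      ∀ (v : B.V (ns l)) (w : B.V (c + 1)),
        ∃ f : ∀ i, B.E i, B.SegOn f (ns l) (c + 1) ∧ B.src (f (ns l)) = v ∧ B.tgt (f c) = w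

/-- The natural (Cantor) topology on the path space, induced from the product of
the discrete topologies on the edge sets. -/
def pathTop : TopologicalSpace B.PathSpace :=
  TopologicalSpace.induced Subtype.val (@Pi.topologicalSpace ℕ B.E (fun _ => ⊥))

/-- Integer iterates of a bijection of the path space. -/
def iterZ (T : B.PathSpace ≃ B.PathSpace) (m : ℤ) : B.PathSpace ≃ B.PathSpace :=
  (T : Equiv.Perm B.PathSpace) ^ m

/-- Two paths have the same `k`-coding: for every time `m` the initial segments of
`T^m x` and `T^m y` from the root to level `k` coincide. -/
def SameCoding (T : B.PathSpace ≃ B.PathSpace) (k : ℕ) (x y : B.PathSpace) : Prop :=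
  ∀ (m : ℤ) (i : ℕ), i < k → ((B.iterZ T m) x).1 i = ((B.iterZ T m) y).1 i

/-- A depth `k` pair: distinct paths with the same `k`-coding but not the same
`(k+1)`-coding. -/
def DepthPair (T : B.PathSpace ≃ B.PathSpace) (k : ℕ) (x y : B.PathSpace) : Prop :=
  x ≠ y ∧ B.SameCoding T k x y ∧ ¬ B.SameCoding T (k + 1) x y

/-- The pair `x, y` has a `j` cut: for some time `m`, both `T^m x` and `T^m y` are
minimal from the root into level `j`. -/
def HasCut (T : B.PathSpace ≃ B.PathSpace) (j : ℕ) (x y : B.PathSpace) : Prop :=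
  ∃ m : ℤ, (∀ i : ℕ, i < j → B.IsMinEdge (((B.iterZ T m) x).1 i)) ∧
    (∀ i : ℕ, i < j → B.IsMinEdge (((B.iterZ T m) y).1 i))

/-- Nonexpansive: for every `k ≥ 1` there are two distinct paths with the same
`k`-coding. -/
def Nonexpansive (T : B.PathSpace ≃ B.PathSpace) : Prop :=
  ∀ k : ℕ, 1 ≤ k → ∃ x y : B.PathSpace, x ≠ y ∧ B.SameCoding T k x y

/-- Well timed: for every `k ≥ 1` and every `j > k` there is a depth `k` pair with
a `j` cut. -/
def WellTimed (T : B.PathSpace ≃ B.PathSpace) : Prop :=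
  ∀ k : ℕ, 1 ≤ k → ∀ j : ℕ, k < j →
    ∃ x y : B.PathSpace, B.DepthPair T k x y ∧ B.HasCut T j x y

/-- Very well timed: for every `k ≥ 1` there is a depth `k` pair having a `j` cut
for every `j > k`. -/
def VeryWellTimed (T : B.PathSpace ≃ B.PathSpace) : Prop :=
  ∀ k : ℕ, 1 ≤ k →
    ∃ x y : B.PathSpace, B.DepthPair T k x y ∧ ∀ j : ℕ, k < j → B.HasCut T j x y

/-- Weakly well timed: for infinitely many `k ≥ 1`, for every `j > k` there is a
depth `k` pair with a `j` cut. -/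
def WeaklyWellTimed (T : B.PathSpace ≃ B.PathSpace) : Prop :=
  ∀ K : ℕ, ∃ k : ℕ, K ≤ k ∧ 1 ≤ k ∧ ∀ j : ℕ, k < j →
    ∃ x y : B.PathSpace, B.DepthPair T k x y ∧ B.HasCut T j x y

/-- Untimed: for every `k ≥ 1` there is a `j > k` such that no depth `k` pair has a
`j` cut. -/
def Untimed (T : B.PathSpace ≃ B.PathSpace) : Prop :=
  ∀ k : ℕ, 1 ≤ k → ∃ j : ℕ, k < j ∧
    ∀ x y : B.PathSpace, B.DepthPair T k x y → ¬ B.HasCut T j x y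

/-- Very untimed: for every `k ≥ 1`, no depth `k` pair has a `(k+1)` cut. -/
def VeryUntimed (T : B.PathSpace ≃ B.PathSpace) : Prop :=
  ∀ k : ℕ, 1 ≤ k →
    ∀ x y : B.PathSpace, B.DepthPair T k x y → ¬ B.HasCut T (k + 1) x y

/-- Finite paths from the root to level `n`. -/
def FinPath (n : ℕ) : Type :=
  { f : (i : Fin n) → B.E i.val //
    ∀ (i : ℕ) (h : i + 1 < n), B.tgt (f ⟨i, by omega⟩) = B.src (f ⟨i + 1, h⟩) }

/-- The lexicographic (from the end) order on finite paths to level `n` induced by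
the orders on the edges. -/
def finLT {n : ℕ} (p q : B.FinPath n) : Prop :=
  ∃ (N : ℕ) (h : N < n), B.elt (p.1 ⟨N, h⟩) (q.1 ⟨N, h⟩) ∧
    ∀ (i : ℕ) (hi : i < n), N < i → p.1 ⟨i, hi⟩ = q.1 ⟨i, hi⟩

/-- The finite path `p` to level `n` ends at the vertex `v`. -/
def EndsAt {n : ℕ} (p : B.FinPath n) (v : B.V n) : Prop :=
  ∀ (m : ℕ) (h : n = m + 1), B.tgt (p.1 ⟨m, by omega⟩) = B.castV h v

/-- The initial segment of an infinite path, from the root to level `n`. -/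
def pathInit (x : B.PathSpace) (n : ℕ) : B.FinPath n :=
  ⟨fun i => x.1 i.val, fun i _ => x.2 i⟩

/-- The vertex of an infinite path at level `n`. -/
def pathVert (x : B.PathSpace) (n : ℕ) : B.V n := B.src (x.1 n)

theorem pathInit_endsAt (x : B.PathSpace) (n : ℕ) :
    B.EndsAt (B.pathInit x n) (B.pathVert x n) := by
  intro m h
  subst h
  exact x.2 m

/-- Truncation of a finite path to a lower level. -/
def truncTo {n : ℕ} (k : ℕ) (hk : k ≤ n) (p : B.FinPath n) : B.FinPath k :=
  ⟨fun i => p.1 ⟨i.val, by omega⟩, fun i h => p.2 i (by omega)⟩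

/-- Paths `x, x'` are `k`-equivalent at level `n`: there is an order isomorphism
between the sets of finite paths from the root into their level-`n` vertices which
preserves truncations to level `k` (equality of `k`-basic blocks) and which matches
the initial segment of `x` with the initial segment of `x'` (the "dot" is in the
same place). -/
def KEquivAt (k n : ℕ) (x x' : B.PathSpace) : Prop :=
  ∃ φ : { p : B.FinPath n // B.EndsAt p (B.pathVert x n) } ≃
      { p : B.FinPath n // B.EndsAt p (B.pathVert x' n) },
    (∀ p q, B.finLT p.1 q.1 ↔ B.finLT (φ p).1 (φ q).1) ∧
    (∀ p (i : ℕ) (hik : i < k) (hin : i < n), ((φ p).1).1 ⟨i, hin⟩ = (p.1).1 ⟨i, hin⟩) ∧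
    φ ⟨B.pathInit x n, B.pathInit_endsAt x n⟩ = ⟨B.pathInit x' n, B.pathInit_endsAt x' n⟩

/-- Paths are `k`-equivalent: they agree from the root to level `k` and are
`k`-equivalent at every level `n > k`. -/
def KEquivPaths (k : ℕ) (x x' : B.PathSpace) : Prop :=
  (∀ i : ℕ, i < k → x.1 i = x'.1 i) ∧ ∀ n : ℕ, k < n → B.KEquivAt k n x x'

/-- Standard nonexpansive: for every `k ≥ 1` there is a pair of distinct
`k`-equivalent paths. -/
def SNE : Prop := ∀ k : ℕ, 1 ≤ k → ∃ x x' : B.PathSpace, x ≠ x' ∧ B.KEquivPaths k x x'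

/-!  ### Telescoping  -/

theorem castV_eq_of_heq {m n : ℕ} (h : m = n) {v : B.V m} {w : B.V n} (hw : HEq v w) :
    B.castV h v = w := by
  subst h
  exact eq_of_heq hw

theorem castV_heq {m n : ℕ} (h : m = n) (v : B.V m) : HEq (B.castV h v) v := by
  subst h
  rfl

theorem castV_inj {m n : ℕ} (h : m = n) {v w : B.V m}
    (hvw : B.castV h v = B.castV h w) : v = w := by
  subst h
  exact hvw

def castE {m n : ℕ} (h : m = n) (e : B.E m) : B.E n := h ▸ e

noncomputable def chainFrom (a : ℕ) (v : B.V a) : (i : ℕ) → B.E (a + i)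
  | 0 => (B.hasOut a v).choose
  | i + 1 => (B.hasOut (a + i + 1) (B.tgt (chainFrom a v i))).choose

theorem chainFrom_src_zero (a : ℕ) (v : B.V a) : B.src (B.chainFrom a v 0) = v :=
  (B.hasOut a v).choose_spec

theorem chainFrom_src_succ (a : ℕ) (v : B.V a) (i : ℕ) :
    B.src (B.chainFrom a v (i + 1)) = B.tgt (B.chainFrom a v i) :=
  (B.hasOut (a + i + 1) (B.tgt (B.chainFrom a v i))).choose_spec

noncomputable def chainTo (a : ℕ) : (j : ℕ) → (w : B.V (a + j + 1)) → (i : ℕ) → i ≤ j → B.E (a + i)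
  | 0, w, i, _ => B.castE (by omega : a + 0 = a + i) (B.hasIn a w).choose
  | j + 1, w, i, _ =>
      if h : i ≤ j then chainTo a j (B.src (B.hasIn (a + j + 1) w).choose) i h
      else B.castE (by omega : a + (j + 1) = a + i) (B.hasIn (a + j + 1) w).choose

theorem chainTo_tgt_last (a : ℕ) : ∀ (j : ℕ) (w : B.V (a + j + 1)),
    B.tgt (B.chainTo a j w j le_rfl) = w := by
  intro j w
  cases j with
  | zero =>
      simp only [chainTo]
      exact (B.hasIn a w).choose_spec
  | succ j =>
      simp only [chainTo]
      rw [dif_neg (by omega : ¬ j + 1 ≤ j)]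
      exact (B.hasIn (a + j + 1) w).choose_spec

theorem chainTo_chain (a : ℕ) : ∀ (j : ℕ) (w : B.V (a + j + 1)) (i : ℕ) (h : i + 1 ≤ j)
    (h' : i ≤ j), B.tgt (B.chainTo a j w i h') = B.src (B.chainTo a j w (i + 1) h) := by
  intro j
  induction j with
  | zero => intro w i h h'; omega
  | succ j ih =>
      intro w i h h'
      by_cases hij : i + 1 ≤ j
      · simp only [chainTo]
        rw [dif_pos (by omega : i ≤ j), dif_pos hij]
        exact ih _ i hij (by omega)
      · have hi : i = j := by omega
        subst hi
        simp only [chainTo]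
        rw [dif_pos (le_refl i), dif_neg (by omega : ¬ i + 1 ≤ i)]
        exact B.chainTo_tgt_last a i _


def TelE (a b : ℕ) : Type :=
  { f : (i : Fin (b - a)) → B.E (a + i.val) //
    ∀ (i : ℕ) (h : i + 1 < b - a), B.tgt (f ⟨i, by omega⟩) = B.src (f ⟨i + 1, h⟩) }

def telSrc {a b : ℕ} (hab : a < b) (f : B.TelE a b) : B.V a :=
  B.src (f.1 ⟨0, by omega⟩)

def telTgt {a b : ℕ} (hab : a < b) (f : B.TelE a b) : B.V b :=
  B.castV (by omega : a + (b - a - 1) + 1 = b) (B.tgt (f.1 ⟨b - a - 1, by omega⟩))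

def telLT {a b : ℕ} (f g : B.TelE a b) : Prop :=
  ∃ (N : ℕ) (h : N < b - a), B.elt (f.1 ⟨N, h⟩) (g.1 ⟨N, h⟩) ∧
    ∀ (i : ℕ) (hi : i < b - a), N < i → f.1 ⟨i, hi⟩ = g.1 ⟨i, hi⟩

noncomputable def Telescope (ns : ℕ → ℕ) (hmono : StrictMono ns) (h0 : ns 0 = 0) : BDiagram where
  V l := B.V (ns l)
  E l := B.TelE (ns l) (ns (l + 1))
  fintV l := B.fintV (ns l)
  fintE l := by
    classical
    letI : ∀ i : Fin (ns (l + 1) - ns l), Fintype (B.E (ns l + i.val)) := fun i => B.fintE _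
    exact Subtype.fintype _
  nonV l := B.nonV (ns l)
  rootSubsingleton := by show Subsingleton (B.V (ns 0)); rw [h0]; exact B.rootSubsingleton
  src {l} f := B.telSrc (hmono (Nat.lt_succ_self l)) f
  tgt {l} f := B.telTgt (hmono (Nat.lt_succ_self l)) f
  hasOut := by
    intro l v
    refine ⟨⟨fun i => B.chainFrom (ns l) v i.val,
      fun i h => (B.chainFrom_src_succ (ns l) v i).symm⟩, ?_⟩
    exact B.chainFrom_src_zero (ns l) v
  hasIn := by
    intro l w
    have hab : ns l < ns (l + 1) := hmono (Nat.lt_succ_self l)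
    have hj : ns l + (ns (l + 1) - ns l - 1) + 1 = ns (l + 1) := by omega
    refine ⟨⟨fun i => B.chainTo (ns l) (ns (l + 1) - ns l - 1) (B.castV hj.symm w) i.val
        (by omega), fun i h => B.chainTo_chain _ _ _ i (by omega) (by omega)⟩, ?_⟩
    show B.castV (by omega) (B.tgt (B.chainTo (ns l) (ns (l + 1) - ns l - 1)
      (B.castV hj.symm w) (ns (l + 1) - ns l - 1) (by omega))) = w
    rw [B.chainTo_tgt_last]
    exact B.castV_eq_of_heq _ (B.castV_heq _ w)
  elt {l} f g := B.telLT f g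
  elt_tgt := by
    rintro l f g ⟨N, hN, hlt, hgt⟩
    show B.telTgt _ f = B.telTgt _ g
    unfold telTgt
    refine congrArg (B.castV _) ?_
    rcases eq_or_lt_of_le (show N ≤ ns (l + 1) - ns l - 1 by omega) with h | h
    · subst h
      exact B.elt_tgt _ _ _ hlt
    · exact congrArg B.tgt (hgt _ (by omega) h)
  elt_irrefl := by
    rintro l f ⟨N, h, hlt, -⟩
    exact B.elt_irrefl _ _ hlt
  elt_trans := by
    rintro l f g h ⟨N₁, hN₁, hlt₁, hgt₁⟩ ⟨N₂, hN₂, hlt₂, hgt₂⟩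
    rcases lt_trichotomy N₁ N₂ with hc | hc | hc
    · exact ⟨N₂, hN₂, by rw [hgt₁ N₂ hN₂ hc]; exact hlt₂,
        fun i hi hN => (hgt₁ i hi (by omega)).trans (hgt₂ i hi hN)⟩
    · subst hc
      exact ⟨N₁, hN₁, B.elt_trans _ _ _ _ hlt₁ hlt₂,
        fun i hi hN => (hgt₁ i hi hN).trans (hgt₂ i hi hN)⟩
    · refine ⟨N₁, hN₁, ?_, fun i hi hN => (hgt₁ i hi hN).trans (hgt₂ i hi (by omega))⟩
      rw [← hgt₂ N₁ hN₁ hc]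
      exact hlt₁
  elt_total := by
    intro l f g htgt hne
    classical
    have hab : ns l < ns (l + 1) := hmono (Nat.lt_succ_self l)
    set b := ns (l + 1) - ns l with hb
    have hex : ∃ N, ∃ h : N < b, f.1 ⟨N, h⟩ ≠ g.1 ⟨N, h⟩ := by
      by_contra hco
      push_neg at hco
      exact hne (Subtype.ext (funext fun i => hco i.val i.isLt))
    set P : ℕ → Prop := fun N => ∃ h : N < b, f.1 ⟨N, h⟩ ≠ g.1 ⟨N, h⟩ with hP
    obtain ⟨N₀, hN₀⟩ := hex
    set N := Nat.findGreatest P b with hNdef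
    have hPN : P N := Nat.findGreatest_spec (le_of_lt hN₀.choose) hN₀
    have hafter : ∀ i (hi : i < b), N < i → f.1 ⟨i, hi⟩ = g.1 ⟨i, hi⟩ := by
      intro i hi hNi
      by_contra hcon
      exact Nat.findGreatest_is_greatest hNi (le_of_lt hi) ⟨hi, hcon⟩
    clear_value N
    obtain ⟨hNb, hNne⟩ := hPN
    have htgtN : B.tgt (f.1 ⟨N, hNb⟩) = B.tgt (g.1 ⟨N, hNb⟩) := by
      rcases eq_or_lt_of_le (show N ≤ b - 1 by omega) with h | h
      · -- N is the last index; use equality of targets of the composite edges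
        subst h
        exact B.castV_inj _ htgt
      · have h2 : f.1 ⟨N + 1, by omega⟩ = g.1 ⟨N + 1, by omega⟩ :=
          hafter (N + 1) (by omega) (by omega)
        rw [f.2 N (by omega), g.2 N (by omega), h2]
    rcases B.elt_total _ _ _ htgtN hNne with h | h
    · exact Or.inl ⟨N, hNb, h, hafter⟩
    · exact Or.inr ⟨N, hNb, h, fun i hi hN => (hafter i hi hN).symm⟩

def teleMap (ns : ℕ → ℕ) (hmono : StrictMono ns) (h0 : ns 0 = 0) (x : B.PathSpace) :
    (B.Telescope ns hmono h0).PathSpace :=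
  ⟨fun l => ⟨fun i => x.1 (ns l + i.val), fun i _ => x.2 (ns l + i)⟩, fun l => by
    have hab : ns l < ns (l + 1) := hmono (Nat.lt_succ_self l)
    have hm : ns l + (ns (l + 1) - ns l - 1) + 1 = ns (l + 1) := by omega
    show B.castV _ (B.tgt (x.1 (ns l + (ns (l + 1) - ns l - 1)))) = B.src (x.1 (ns (l + 1) + 0))
    rw [x.2 (ns l + (ns (l + 1) - ns l - 1))]
    exact B.castV_eq_of_heq _ (by rw [hm]; exact HEq.rfl)⟩


/-- Level `n+1` is uniformly ordered: there is a single nonempty block `P` of paths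
from the root to level `n` such that the `n`-basic block at every vertex at level
`n+1` is a positive power of `P`. -/
def UniformlyOrderedLevel (n : ℕ) : Prop :=
  ∃ (p : ℕ) (hp : 0 < p) (P : Fin p → B.FinPath n),
    ∀ v : B.V (n + 1), ∃ (m : ℕ), 0 < m ∧
      ∃ enum : Fin (m * p) ≃ { q : B.FinPath (n + 1) // B.EndsAt q v },
        (∀ i j : Fin (m * p), i < j ↔ B.finLT (enum i).1 (enum j).1) ∧
        (∀ i : Fin (m * p),
          B.truncTo n (Nat.le_succ n) (enum i).1 = P ⟨i.val % p, Nat.mod_lt _ hp⟩)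

/-- The ordinal label of an edge: its position in the linear order on the edges
into its target. -/
noncomputable def edgeLabel {n : ℕ} (e : B.E n) : ℕ := Nat.card { e' : B.E n // B.elt e' e }

/-- Deterministic: for every `n ≥ 1`, distinct edges with the same source at level
`n` have different ordinal labels. -/
def Deterministic : Prop :=
  ∀ n : ℕ, 1 ≤ n → ∀ e f : B.E n, B.src e = B.src f → e ≠ f →
    B.edgeLabel e ≠ B.edgeLabel f

end BDiagram

/-- A Bratteli–Vershik system: a simple, properly ordered ordered Bratteli diagram
together with its Vershik map. -/
structure BVSystem where
  B : BDiagram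
  T : B.PathSpace ≃ B.PathSpace
  proper : B.ProperlyOrdered
  simple : B.Simple
  vershik : B.IsVershik T

/-- Conjugacy of systems: an equivariant homeomorphism of the path spaces taking
minimal paths to minimal paths. -/
def Conjugate (S S' : BVSystem) : Prop :=
  ∃ φ : S.B.PathSpace ≃ S'.B.PathSpace,
    (@Continuous _ _ S.B.pathTop S'.B.pathTop φ) ∧
    (@Continuous _ _ S'.B.pathTop S.B.pathTop φ.symm) ∧
    (∀ x, φ (S.T x) = S'.T (φ x)) ∧
    (∀ x, S.B.IsMinPath x → S'.B.IsMinPath (φ x))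

/-- An odometer: a system whose diagram has exactly one vertex at every level. -/
def IsOdometer (S : BVSystem) : Prop := ∀ n, Subsingleton (S.B.V n)


/-!  ### Auxiliary machinery for Statement 7  -/

theorem fin_mk_eq {M a b : ℕ} (ha : a < M) (hb : b < M) (h : a = b) :
    (⟨a, ha⟩ : Fin M) = ⟨b, hb⟩ := by subst h; rfl

theorem heq_app {ι : Type} {F : ι → Type} (g : ∀ i, F i) {i j : ι} (h : i = j) :
    HEq (g i) (g j) := by subst h; rfl

namespace BDiagram

variable (B : BDiagram)

theorem heq_tgt {m n : ℕ} (h : m = n) {e : B.E m} {f : B.E n} (hef : HEq e f) :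
    HEq (B.tgt e) (B.tgt f) := by subst h; cases hef; rfl

theorem heq_src {m n : ℕ} (h : m = n) {e : B.E m} {f : B.E n} (hef : HEq e f) :
    HEq (B.src e) (B.src f) := by subst h; cases hef; rfl

theorem heq_elt {m n : ℕ} (h : m = n) {e e' : B.E m} {f f' : B.E n}
    (he : HEq e f) (he' : HEq e' f') : B.elt e e' ↔ B.elt f f' := by
  subst h; cases he; cases he'; rfl

theorem castE_heq {m n : ℕ} (h : m = n) (e : B.E m) : HEq (B.castE h e) e := by
  subst h; rfl

theorem castE_self {n : ℕ} (h : n = n) (e : B.E n) : B.castE h e = e := rfl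

theorem src_castE {m n : ℕ} (h : m = n) (e : B.E m) :
    B.src (B.castE h e) = B.castV h (B.src e) := by subst h; rfl

theorem tgt_castE {m n : ℕ} (h : m = n) (e : B.E m) :
    B.tgt (B.castE h e) = B.castV (congrArg (· + 1) h) (B.tgt e) := by subst h; rfl

theorem edge_trans {m n : ℕ} (x y : B.PathSpace) (h : m = n)
    (hxy : x.1 m = y.1 m) : x.1 n = y.1 n := by subst h; exact hxy

/-- Totality of `pathLT` on distinct cofinal paths. -/
theorem pathLT_total (x y : B.PathSpace) (hne : x ≠ y) (M : ℕ)
    (hM : ∀ n, M ≤ n → x.1 n = y.1 n) : B.pathLT x y ∨ B.pathLT y x := by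
  classical
  have hex : ∃ N, x.1 N ≠ y.1 N := by
    by_contra hco; push_neg at hco
    exact hne (Subtype.ext (funext hco))
  obtain ⟨N₀, hN₀⟩ := hex
  have hN₀M : N₀ < M := by
    by_contra h; push_neg at h; exact hN₀ (hM N₀ h)
  set P : ℕ → Prop := fun N => x.1 N ≠ y.1 N with hP
  have hPN : P (Nat.findGreatest P M) := Nat.findGreatest_spec (le_of_lt hN₀M) hN₀
  have hafter : ∀ n, Nat.findGreatest P M < n → x.1 n = y.1 n := by
    intro n hn
    by_contra hcon
    rcases lt_or_ge n M with h | h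
    · exact Nat.findGreatest_is_greatest hn (le_of_lt h) hcon
    · exact hcon (hM n h)
  have htgt : B.tgt (x.1 (Nat.findGreatest P M)) = B.tgt (y.1 (Nat.findGreatest P M)) := by
    rw [x.2, y.2, hafter _ (Nat.lt_succ_self _)]
  rcases B.elt_total _ _ _ htgt hPN with h | h
  · exact Or.inl ⟨_, h, hafter⟩
  · exact Or.inr ⟨_, h, fun n hn => (hafter n hn).symm⟩

theorem tele_exists_block (ns : ℕ → ℕ) (hmono : StrictMono ns) (h0 : ns 0 = 0) (n : ℕ) :
    ∃ l, ns l ≤ n ∧ n < ns (l + 1) := by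
  classical
  set P : ℕ → Prop := fun l => ns l ≤ n with hP
  refine ⟨Nat.findGreatest P n, ?_, ?_⟩
  · exact Nat.findGreatest_spec (P := P) (Nat.zero_le n)
      (show ns 0 ≤ n by rw [h0]; exact Nat.zero_le n)
  · by_contra h
    push_neg at h
    have h1 : Nat.findGreatest P n + 1 ≤ ns (Nat.findGreatest P n + 1) :=
      hmono.le_apply
    exact Nat.findGreatest_is_greatest (P := P) (n := n)
      (Nat.lt_succ_self _) (by omega) h

variable (ns : ℕ → ℕ) (hmono : StrictMono ns) (h0 : ns 0 = 0)

noncomputable def teleInvFun (y : (B.Telescope ns hmono h0).PathSpace) (n : ℕ) : B.E n :=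
  B.castE
    (Nat.add_sub_cancel' (tele_exists_block ns hmono h0 n).choose_spec.1)
    ((y.1 (tele_exists_block ns hmono h0 n).choose).1
      ⟨n - ns (tele_exists_block ns hmono h0 n).choose,
        by have := (tele_exists_block ns hmono h0 n).choose_spec; omega⟩)

theorem teleInvFun_spec (y : (B.Telescope ns hmono h0).PathSpace) (n l : ℕ)
    (h1 : ns l ≤ n) (h2 : n < ns (l + 1)) (hb : n - ns l < ns (l + 1) - ns l) :
    HEq (B.teleInvFun ns hmono h0 y n) ((y.1 l).1 ⟨n - ns l, hb⟩) := by
  have hc := (tele_exists_block ns hmono h0 n).choose_spec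
  have hl : (tele_exists_block ns hmono h0 n).choose = l := by
    rcases Nat.lt_trichotomy (tele_exists_block ns hmono h0 n).choose l with h | h | h
    · exfalso
      have := hmono.monotone (show (tele_exists_block ns hmono h0 n).choose + 1 ≤ l from h)
      omega
    · exact h
    · exfalso
      have := hmono.monotone (show l + 1 ≤ (tele_exists_block ns hmono h0 n).choose from h)
      omega
  subst hl
  unfold teleInvFun
  exact B.castE_heq _ _

theorem teleInvFun_chain (y : (B.Telescope ns hmono h0).PathSpace) (n : ℕ) :
    B.tgt (B.teleInvFun ns hmono h0 y n) = B.src (B.teleInvFun ns hmono h0 y (n + 1)) := by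
  obtain ⟨l, h1, h2⟩ := tele_exists_block ns hmono h0 n
  have hle := hmono (show l < l + 1 by omega)
  have s1 := B.teleInvFun_spec ns hmono h0 y n l h1 h2 (by omega)
  rcases lt_or_eq_of_le (show n + 1 ≤ ns (l + 1) from h2) with hlt | heq
  · have s2 := B.teleInvFun_spec ns hmono h0 y (n + 1) l (by omega) hlt (by omega)
    have hch := (y.1 l).2 (n - ns l) (show n - ns l + 1 < ns (l + 1) - ns l by omega)
    have e23 : HEq ((y.1 l).1 ⟨n - ns l + 1, by omega⟩) ((y.1 l).1 ⟨n + 1 - ns l, by omega⟩) :=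
      heq_app _ (fin_mk_eq (by omega) (by omega) (by omega))
    refine eq_of_heq ?_
    refine (B.heq_tgt (show n = ns l + (n - ns l) by omega) s1).trans ?_
    refine (heq_of_eq hch).trans ?_
    refine (B.heq_src (show ns l + (n - ns l + 1) = ns l + (n + 1 - ns l) by omega) e23).trans ?_
    exact (B.heq_src (show n + 1 = ns l + (n + 1 - ns l) by omega) s2).symm
  · have hle2 := hmono (show l + 1 < l + 1 + 1 by omega)
    have s2 := B.teleInvFun_spec ns hmono h0 y (n + 1) (l + 1) (by omega) (by omega) (by omega)
    have h2' : B.castV (show ns l + (ns (l + 1) - ns l - 1) + 1 = ns (l + 1) by omega)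
        (B.tgt ((y.1 l).1 ⟨ns (l + 1) - ns l - 1, by omega⟩))
        = B.src ((y.1 (l + 1)).1 ⟨0, by omega⟩) := y.2 l
    have hch : HEq (B.tgt ((y.1 l).1 ⟨ns (l + 1) - ns l - 1, by omega⟩))
        (B.src ((y.1 (l + 1)).1 ⟨0, by omega⟩)) :=
      (B.castV_heq _ _).symm.trans (heq_of_eq h2')
    have e12 : HEq ((y.1 l).1 ⟨n - ns l, by omega⟩)
        ((y.1 l).1 ⟨ns (l + 1) - ns l - 1, by omega⟩) :=
      heq_app _ (fin_mk_eq (by omega) (by omega) (by omega))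
    have e34 : HEq ((y.1 (l + 1)).1 ⟨0, by omega⟩)
        ((y.1 (l + 1)).1 ⟨n + 1 - ns (l + 1), by omega⟩) :=
      heq_app _ (fin_mk_eq (by omega) (by omega) (by omega))
    refine eq_of_heq ?_
    refine (B.heq_tgt (show n = ns l + (n - ns l) by omega) s1).trans ?_
    refine (B.heq_tgt (show ns l + (n - ns l) = ns l + (ns (l + 1) - ns l - 1) by omega) e12).trans ?_
    refine hch.trans ?_
    refine (B.heq_src (show ns (l + 1) + 0 = ns (l + 1) + (n + 1 - ns (l + 1)) by omega) e34).trans ?_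
    exact (B.heq_src (show n + 1 = ns (l + 1) + (n + 1 - ns (l + 1)) by omega) s2).symm

noncomputable def teleInv (y : (B.Telescope ns hmono h0).PathSpace) : B.PathSpace :=
  ⟨B.teleInvFun ns hmono h0 y, B.teleInvFun_chain ns hmono h0 y⟩

theorem teleMap_teleInv (y : (B.Telescope ns hmono h0).PathSpace) :
    B.teleMap ns hmono h0 (B.teleInv ns hmono h0 y) = y := by
  apply Subtype.ext; funext l; apply Subtype.ext; funext i
  obtain ⟨iv, hi⟩ := i
  have hle := hmono (show l < l + 1 by omega)
  have s := B.teleInvFun_spec ns hmono h0 y (ns l + iv) l (by omega) (by omega) (by omega)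
  exact eq_of_heq (s.trans (heq_app _ (fin_mk_eq (by omega) hi (by omega))))

theorem teleMap_surj : Function.Surjective (B.teleMap ns hmono h0) :=
  fun y => ⟨B.teleInv ns hmono h0 y, B.teleMap_teleInv ns hmono h0 y⟩

end BDiagram

namespace BDiagram

variable (B : BDiagram)

/-- Replace the edge of `x` at level `a + N` by `e'`, keep the edges of `x` above,
and complete below by an arbitrary connecting chain. -/
noncomputable def replEdge (a N : ℕ) (x : B.PathSpace) (e' : B.E (a + N)) (i : ℕ) :
    B.E (a + i) :=
  if h : i < N then
    B.chainTo a (N - 1) (B.castV (show a + N = a + (N - 1) + 1 by omega) (B.src e')) i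
      (by omega)
  else if h2 : i = N then B.castE (show a + N = a + i by omega) e'
  else x.1 (a + i)

theorem replEdge_lt (a N : ℕ) (x : B.PathSpace) (e' : B.E (a + N)) (i : ℕ) (h : i < N) :
    B.replEdge a N x e' i =
      B.chainTo a (N - 1) (B.castV (show a + N = a + (N - 1) + 1 by omega) (B.src e')) i
        (by omega) := by
  unfold replEdge; rw [dif_pos h]

theorem replEdge_eq (a N : ℕ) (x : B.PathSpace) (e' : B.E (a + N)) (i : ℕ) (h2 : i = N) :
    B.replEdge a N x e' i = B.castE (show a + N = a + i by omega) e' := by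
  unfold replEdge; rw [dif_neg (by omega), dif_pos h2]

theorem replEdge_gt (a N : ℕ) (x : B.PathSpace) (e' : B.E (a + N)) (i : ℕ) (h : N < i) :
    B.replEdge a N x e' i = x.1 (a + i) := by
  unfold replEdge; rw [dif_neg (by omega), dif_neg (by omega)]

theorem replEdge_chain (a N : ℕ) (x : B.PathSpace) (e' : B.E (a + N))
    (htgt : B.tgt e' = B.tgt (x.1 (a + N))) (i : ℕ) :
    B.tgt (B.replEdge a N x e' i) = B.src (B.replEdge a N x e' (i + 1)) := by
  rcases Nat.lt_trichotomy (i + 1) N with hc | hc | hc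
  · rw [B.replEdge_lt a N x e' i (by omega), B.replEdge_lt a N x e' (i + 1) hc]
    exact B.chainTo_chain a (N - 1) _ i (by omega) (by omega)
  · have hi : i = N - 1 := by omega
    subst hi
    rw [B.replEdge_lt a N x e' (N - 1) (by omega), B.replEdge_eq a N x e' (N - 1 + 1) hc,
      B.src_castE]
    exact B.chainTo_tgt_last a (N - 1) _
  · rcases Nat.lt_or_ge N i with hc2 | hc2
    · rw [B.replEdge_gt a N x e' i hc2, B.replEdge_gt a N x e' (i + 1) (by omega)]
      exact x.2 (a + i)
    · have hi : i = N := by omega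
      subst hi
      rw [B.replEdge_eq a i x e' i rfl, B.replEdge_gt a i x e' (i + 1) (by omega),
        B.castE_self, htgt]
      exact x.2 (a + i)

noncomputable def replTelE (a N b : ℕ) (x : B.PathSpace) (e' : B.E (a + N))
    (htgt : B.tgt e' = B.tgt (x.1 (a + N))) : B.TelE a b :=
  ⟨fun i => B.replEdge a N x e' i.val, fun i _ => B.replEdge_chain a N x e' htgt i⟩

variable (ns : ℕ → ℕ) (hmono : StrictMono ns) (h0 : ns 0 = 0)

theorem teleMap_pathLT {x y : B.PathSpace} (h : B.pathLT x y) :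
    (B.Telescope ns hmono h0).pathLT (B.teleMap ns hmono h0 x) (B.teleMap ns hmono h0 y) := by
  obtain ⟨N, hlt, hafter⟩ := h
  obtain ⟨l, h1, h2⟩ := tele_exists_block ns hmono h0 N
  obtain ⟨j, rfl⟩ : ∃ j, N = ns l + j := ⟨N - ns l, by omega⟩
  refine ⟨l, ⟨j, by omega, hlt, ?_⟩, ?_⟩
  · intro i hi hji
    exact hafter (ns l + i) (by omega)
  · intro l' hl'
    apply Subtype.ext; funext i
    have hm := hmono.monotone (show l + 1 ≤ l' from hl')
    exact hafter (ns l' + i.val) (by omega)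

theorem pathLT_of_teleMap {x y : B.PathSpace}
    (h : (B.Telescope ns hmono h0).pathLT (B.teleMap ns hmono h0 x) (B.teleMap ns hmono h0 y)) :
    B.pathLT x y := by
  obtain ⟨L, helt, hafter⟩ := h
  obtain ⟨j, hj, hlt, hin⟩ := helt
  refine ⟨ns L + j, hlt, ?_⟩
  intro n hn
  rcases Nat.lt_or_ge n (ns (L + 1)) with hc | hc
  · exact B.edge_trans x y (show ns L + (n - ns L) = n by omega)
      (hin (n - ns L) (by omega) (by omega))
  · obtain ⟨l', h1, h2⟩ := tele_exists_block ns hmono h0 n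
    have hl' : L < l' := by
      by_contra hcc; push_neg at hcc
      have := hmono.monotone (show l' + 1 ≤ L + 1 by omega)
      omega
    have hcomp := congrFun (congrArg Subtype.val (hafter l' hl')) ⟨n - ns l', by omega⟩
    exact B.edge_trans x y (show ns l' + (n - ns l') = n by omega) hcomp

theorem isMax_teleMap {x : B.PathSpace} (h : B.IsMaxPath x) :
    (B.Telescope ns hmono h0).IsMaxPath (B.teleMap ns hmono h0 x) := by
  intro l g hg
  obtain ⟨N, hN, hlt, -⟩ := hg
  exact h (ns l + N) _ hlt

theorem isMin_teleMap {x : B.PathSpace} (h : B.IsMinPath x) :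
    (B.Telescope ns hmono h0).IsMinPath (B.teleMap ns hmono h0 x) := by
  intro l g hg
  obtain ⟨N, hN, hlt, -⟩ := hg
  exact h (ns l + N) _ hlt

theorem not_isMaxPath_teleMap {x : B.PathSpace} (h : ¬ B.IsMaxPath x) :
    ¬ (B.Telescope ns hmono h0).IsMaxPath (B.teleMap ns hmono h0 x) := by
  simp only [IsMaxPath, IsMaxEdge] at h
  push_neg at h
  obtain ⟨n, e', hlt⟩ := h
  obtain ⟨l, h1, h2⟩ := tele_exists_block ns hmono h0 n
  obtain ⟨N, rfl⟩ : ∃ N, n = ns l + N := ⟨n - ns l, by omega⟩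
  intro hmax
  refine hmax l (B.replTelE (ns l) N (ns (l + 1)) x e' (B.elt_tgt _ _ _ hlt).symm) ?_
  refine ⟨N, by omega, ?_, ?_⟩
  · show B.elt (x.1 (ns l + N)) (B.replEdge (ns l) N x e' N)
    rw [B.replEdge_eq (ns l) N x e' N rfl, B.castE_self]
    exact hlt
  · intro i hi hNi
    show x.1 (ns l + i) = B.replEdge (ns l) N x e' i
    rw [B.replEdge_gt (ns l) N x e' i hNi]

theorem isMin_of_teleMap {z : B.PathSpace}
    (h : (B.Telescope ns hmono h0).IsMinPath (B.teleMap ns hmono h0 z)) :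
    B.IsMinPath z := by
  by_contra hc
  simp only [IsMinPath, IsMinEdge] at hc
  push_neg at hc
  obtain ⟨n, e', hlt⟩ := hc
  obtain ⟨l, h1, h2⟩ := tele_exists_block ns hmono h0 n
  obtain ⟨N, rfl⟩ : ∃ N, n = ns l + N := ⟨n - ns l, by omega⟩
  refine h l (B.replTelE (ns l) N (ns (l + 1)) z e' (B.elt_tgt _ _ _ hlt)) ?_
  refine ⟨N, by omega, ?_, ?_⟩
  · show B.elt (B.replEdge (ns l) N z e' N) (z.1 (ns l + N))
    rw [B.replEdge_eq (ns l) N z e' N rfl, B.castE_self]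
    exact hlt
  · intro i hi hNi
    show B.replEdge (ns l) N z e' i = z.1 (ns l + i)
    rw [B.replEdge_gt (ns l) N z e' i hNi]

theorem teleMap_comm (T : B.PathSpace ≃ B.PathSpace)
    (T' : (B.Telescope ns hmono h0).PathSpace ≃ (B.Telescope ns hmono h0).PathSpace)
    (hproper : B.ProperlyOrdered) (hT : B.IsVershik T)
    (hT' : (B.Telescope ns hmono h0).IsVershik T') (x : B.PathSpace) :
    B.teleMap ns hmono h0 (T x) = T' (B.teleMap ns hmono h0 x) := by
  by_cases hx : B.IsMaxPath x
  · have h1 : (B.Telescope ns hmono h0).IsMinPath (B.teleMap ns hmono h0 (T x)) :=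
      B.isMin_teleMap ns hmono h0 (hT.2 x hx)
    have h2 : (B.Telescope ns hmono h0).IsMinPath (T' (B.teleMap ns hmono h0 x)) :=
      hT'.2 _ (B.isMax_teleMap ns hmono h0 hx)
    obtain ⟨z, hz⟩ := B.teleMap_surj ns hmono h0 (T' (B.teleMap ns hmono h0 x))
    have hzmin : B.IsMinPath z := B.isMin_of_teleMap ns hmono h0 (by rw [hz]; exact h2)
    obtain ⟨w, -, hwuniq⟩ := hproper.1
    have : T x = z := (hwuniq (T x) (hT.2 x hx)).trans (hwuniq z hzmin).symm
    rw [this, hz]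
  · have hs := hT.1 x hx
    have hx' := B.not_isMaxPath_teleMap ns hmono h0 hx
    have hs' := hT'.1 _ hx'
    by_contra hne
    have hlt1 : (B.Telescope ns hmono h0).pathLT (B.teleMap ns hmono h0 x)
        (B.teleMap ns hmono h0 (T x)) := B.teleMap_pathLT ns hmono h0 hs.1
    obtain ⟨N1, -, ha1⟩ := hlt1
    obtain ⟨N2, -, ha2⟩ := hs'.1
    have hag : ∀ m, max N1 N2 + 1 ≤ m →
        (B.teleMap ns hmono h0 (T x)).1 m = (T' (B.teleMap ns hmono h0 x)).1 m :=
      fun m hm => (ha1 m (by omega)).symm.trans (ha2 m (by omega))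
    rcases (B.Telescope ns hmono h0).pathLT_total _ _ hne _ hag with hlt | hlt
    · exact hs'.2 _ (B.teleMap_pathLT ns hmono h0 hs.1) hlt
    · obtain ⟨z, hz⟩ := B.teleMap_surj ns hmono h0 (T' (B.teleMap ns hmono h0 x))
      refine hs.2 z ?_ ?_
      · refine B.pathLT_of_teleMap ns hmono h0 ?_
        rw [hz]
        exact hs'.1
      · refine B.pathLT_of_teleMap ns hmono h0 ?_
        rw [hz]
        exact hlt

theorem teleMap_iterZ (T : B.PathSpace ≃ B.PathSpace)
    (T' : (B.Telescope ns hmono h0).PathSpace ≃ (B.Telescope ns hmono h0).PathSpace)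
    (hcomm : ∀ x, B.teleMap ns hmono h0 (T x) = T' (B.teleMap ns hmono h0 x))
    (m : ℤ) (x : B.PathSpace) :
    B.teleMap ns hmono h0 ((B.iterZ T m) x)
      = ((B.Telescope ns hmono h0).iterZ T' m) (B.teleMap ns hmono h0 x) := by
  have hinv : ∀ x, B.teleMap ns hmono h0 (T.symm x) = T'.symm (B.teleMap ns hmono h0 x) := by
    intro x
    apply T'.injective
    rw [← hcomm, Equiv.apply_symm_apply, Equiv.apply_symm_apply]
  induction m using Int.induction_on generalizing x with
  | zero => rfl
  | succ n ih =>
      have e1 : (B.iterZ T ((n : ℤ) + 1)) x = (B.iterZ T (n : ℤ)) (T x) := by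
        show ((T : Equiv.Perm B.PathSpace) ^ ((n : ℤ) + 1)) x = _
        rw [zpow_add_one]
        rfl
      have e2 : ((B.Telescope ns hmono h0).iterZ T' ((n : ℤ) + 1)) (B.teleMap ns hmono h0 x)
          = ((B.Telescope ns hmono h0).iterZ T' (n : ℤ)) (T' (B.teleMap ns hmono h0 x)) := by
        show ((T' : Equiv.Perm _) ^ ((n : ℤ) + 1)) _ = _
        rw [zpow_add_one]
        rfl
      rw [e1, e2, ih (T x), hcomm]
  | pred n ih =>
      have e1 : (B.iterZ T (-(n : ℤ) - 1)) x = (B.iterZ T (-(n : ℤ))) (T.symm x) := by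
        show ((T : Equiv.Perm B.PathSpace) ^ (-(n : ℤ) - 1)) x = _
        rw [zpow_sub_one]
        rfl
      have e2 : ((B.Telescope ns hmono h0).iterZ T' (-(n : ℤ) - 1)) (B.teleMap ns hmono h0 x)
          = ((B.Telescope ns hmono h0).iterZ T' (-(n : ℤ))) (T'.symm (B.teleMap ns hmono h0 x)) := by
        show ((T' : Equiv.Perm _) ^ (-(n : ℤ) - 1)) _ = _
        rw [zpow_sub_one]
        rfl
      rw [e1, e2, ih (T.symm x), hinv]

theorem sameCoding_iff (T : B.PathSpace ≃ B.PathSpace)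
    (T' : (B.Telescope ns hmono h0).PathSpace ≃ (B.Telescope ns hmono h0).PathSpace)
    (hcomm : ∀ x, B.teleMap ns hmono h0 (T x) = T' (B.teleMap ns hmono h0 x))
    (k : ℕ) (x y : B.PathSpace) :
    (B.Telescope ns hmono h0).SameCoding T' k (B.teleMap ns hmono h0 x)
      (B.teleMap ns hmono h0 y) ↔ B.SameCoding T (ns k) x y := by
  have hiter := B.teleMap_iterZ ns hmono h0 T T' hcomm
  constructor
  · intro h m i hik
    obtain ⟨l, h1, h2⟩ := tele_exists_block ns hmono h0 i
    have hlk : l < k := by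
      by_contra hc; push_neg at hc
      have := hmono.monotone hc
      omega
    have hcomp := h m l hlk
    rw [← hiter m x, ← hiter m y] at hcomp
    have hfc := congrFun (congrArg Subtype.val hcomp) ⟨i - ns l, by omega⟩
    exact B.edge_trans ((B.iterZ T m) x) ((B.iterZ T m) y)
      (show ns l + (i - ns l) = i by omega) hfc
  · intro h m l hlk
    rw [← hiter m x, ← hiter m y]
    apply Subtype.ext; funext i
    have hi := i.isLt
    have hm1 := hmono.monotone (show l + 1 ≤ k from hlk)
    have hm2 := hmono (show l < l + 1 by omega)
    exact h m (ns l + i.val) (by omega)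

end BDiagram

/-- Every depth `k` pair (`k ≥ 1`) in the telescoping of a
simple, properly ordered Bratteli–Vershik system to levels `ns` is the image of a
pair in the original system that is depth `i` for some `ns k ≤ i < ns (k+1)`. -/
theorem depth_pair_lifts
    (B : BDiagram) (T : B.PathSpace ≃ B.PathSpace)
    (hproper : B.ProperlyOrdered) (hsimple : B.Simple) (hT : B.IsVershik T)
    (ns : ℕ → ℕ) (hmono : StrictMono ns) (h0 : ns 0 = 0)
    (T' : (B.Telescope ns hmono h0).PathSpace ≃ (B.Telescope ns hmono h0).PathSpace)
    (hT' : (B.Telescope ns hmono h0).IsVershik T')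
    (k : ℕ) (hk : 1 ≤ k) (x' y' : (B.Telescope ns hmono h0).PathSpace)
    (hxy' : (B.Telescope ns hmono h0).DepthPair T' k x' y') :
    ∃ (x y : B.PathSpace) (i : ℕ), ns k ≤ i ∧ i < ns (k + 1) ∧
      B.DepthPair T i x y ∧
      B.teleMap ns hmono h0 x = x' ∧ B.teleMap ns hmono h0 y = y' := by
  classical
  obtain ⟨x, hx⟩ := B.teleMap_surj ns hmono h0 x'
  obtain ⟨y, hy⟩ := B.teleMap_surj ns hmono h0 y'
  have hcomm := B.teleMap_comm ns hmono h0 T T' hproper hT hT'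
  have hne : x ≠ y := by
    intro h
    exact hxy'.1 (by rw [← hx, ← hy, h])
  have h1 : B.SameCoding T (ns k) x y := by
    refine (B.sameCoding_iff ns hmono h0 T T' hcomm k x y).mp ?_
    rw [hx, hy]
    exact hxy'.2.1
  have h2 : ¬ B.SameCoding T (ns (k + 1)) x y := by
    intro hc
    refine hxy'.2.2 ?_
    rw [← hx, ← hy]
    exact (B.sameCoding_iff ns hmono h0 T T' hcomm (k + 1) x y).mpr hc
  have hmonoSC : ∀ {j j' : ℕ}, j ≤ j' → B.SameCoding T j' x y → B.SameCoding T j x y :=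
    fun hjj' hSC m i hij => hSC m i (lt_of_lt_of_le hij hjj')
  have hbad : ∃ j, ¬ B.SameCoding T j x y := ⟨ns (k + 1), h2⟩
  set J := Nat.find hbad with hJdef
  have hJ : ¬ B.SameCoding T J x y := Nat.find_spec hbad
  have hminJ : ∀ j, j < J → B.SameCoding T j x y := fun j hj =>
    not_not.mp (Nat.find_min hbad hj)
  have hJle : J ≤ ns (k + 1) := Nat.find_le h2
  have hJgt : ns k < J := by
    by_contra hc
    push_neg at hc
    exact hJ (hmonoSC hc h1)
  refine ⟨x, y, J - 1, by omega, by omega, ⟨hne, hminJ (J - 1) (by omega), ?_⟩, hx, hy⟩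
  have hJ1 : J - 1 + 1 = J := by omega
  rw [hJ1]
  exact hJ
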